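/- For r, q ≥ 3, if G is a K_{1,r}-free graph and X ⊆ V(G) induces a K_q-free subgraph, then |X| ≤ (R(r,q) - 1)·γ(G), where R(r,q) is the Ramsey number. -/

import Mathlib

open Finset

variable {V : Type*}

/-- A finset is independent in `G` : no two of its vertices are adjacent. -/
def IsIndepFinset (G : SimpleGraph V) (S : Finset V) : Prop :=
  ∀ u ∈ S, ∀ v ∈ S, ¬ G.Adj u v

/-- A finset dominates `G` : every vertex outside it has a neighbour inside it. -/
def IsDomFinset (G : SimpleGraph V) (D : Finset V) : Prop :=
  ∀ v, v ∉ D → ∃ u ∈ D, G.Adj u v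

/-- The independence number of `G`. -/
noncomputable def indepNum [Fintype V] (G : SimpleGraph V) : ℕ :=
  sSup {n | ∃ S : Finset V, IsIndepFinset G S ∧ S.card = n}

/-- The domination number of `G`. -/
noncomputable def domNum [Fintype V] (G : SimpleGraph V) : ℕ :=
  sInf {n | ∃ D : Finset V, IsDomFinset G D ∧ D.card = n}

/-- `G` is `K_{1,r}`-free: no vertex has `r` pairwise nonadjacent neighbours. -/
def K1rFree (G : SimpleGraph V) (r : ℕ) : Prop :=
  ¬ ∃ (v : V) (A : Finset V), (∀ a ∈ A, G.Adj v a) ∧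
      (∀ a ∈ A, ∀ b ∈ A, a ≠ b → ¬ G.Adj a b) ∧ A.card = r

/-- The classical Ramsey number R(r,q): the least p such that every graph on
p vertices contains a clique of size q or an independent set of size r. -/
noncomputable def ramseyNum (r q : ℕ) : ℕ :=
  sInf {p | ∀ H : SimpleGraph (Fin p),
    (∃ T : Finset (Fin p), (∀ a ∈ T, ∀ b ∈ T, a ≠ b → H.Adj a b) ∧ T.card = q) ∨
    (∃ T : Finset (Fin p), (∀ a ∈ T, ∀ b ∈ T, ¬ H.Adj a b) ∧ T.card = r)}




/-- Recursive Ramsey bound. -/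
def Rbound : ℕ → ℕ → ℕ
  | 0, _ => 0
  | _ + 1, 0 => 0
  | r + 1, q + 1 => Rbound r (q + 1) + Rbound (r + 1) q + 1

lemma ramsey_aux (n : ℕ) : ∀ r q : ℕ, r + q ≤ n →
    ∀ {W : Type*} (H : SimpleGraph W) (S : Finset W), Rbound r q ≤ S.card →
    (∃ T ⊆ S, (∀ a ∈ T, ∀ b ∈ T, a ≠ b → H.Adj a b) ∧ T.card = q) ∨
    (∃ T ⊆ S, (∀ a ∈ T, ∀ b ∈ T, a ≠ b → ¬ H.Adj a b) ∧ T.card = r) := by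
  classical
  induction n with
  | zero =>
    intro r q hrq W H S _
    have : r = 0 := by omega
    subst this
    exact Or.inr ⟨∅, by simp⟩
  | succ n ih =>
    intro r q hrq W H S hS
    match r, q with
    | 0, q => exact Or.inr ⟨∅, by simp⟩
    | r + 1, 0 => exact Or.inl ⟨∅, by simp⟩
    | r + 1, q + 1 =>
      have hcard : 0 < S.card := by
        have : 0 < Rbound (r + 1) (q + 1) := by simp [Rbound]
        omega
      obtain ⟨v, hv⟩ := Finset.card_pos.mp hcard
      set A := (S.erase v).filter (fun w => H.Adj v w) with hA
      set B := (S.erase v).filter (fun w => ¬ H.Adj v w) with hB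
      have hAB : A.card + B.card = S.card - 1 := by
        rw [hA, hB, Finset.card_filter_add_card_filter_not,
          Finset.card_erase_of_mem hv]
      have hsum : Rbound r (q + 1) + Rbound (r + 1) q ≤ A.card + B.card := by
        rw [hAB]
        simp only [Rbound] at hS
        omega
      have hAS : A ⊆ S := (Finset.filter_subset _ _).trans (Finset.erase_subset _ _)
      have hBS : B ⊆ S := (Finset.filter_subset _ _).trans (Finset.erase_subset _ _)
      by_cases hcase : Rbound (r + 1) q ≤ A.card
      · rcases ih (r + 1) q (by omega) H A hcase with ⟨T, hTA, hcl, hTc⟩ | ⟨T, hTA, hind, hTc⟩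
        · -- clique of size q in A; add v
          refine Or.inl ⟨insert v T, ?_, ?_, ?_⟩
          · exact Finset.insert_subset hv (hTA.trans hAS)
          · have hadj : ∀ t ∈ T, H.Adj v t := fun t ht => (Finset.mem_filter.mp (hTA ht)).2
            intro a ha b hb hab
            rcases Finset.mem_insert.mp ha with ha | ha
            · rcases Finset.mem_insert.mp hb with hb | hb
              · exact absurd (ha.trans hb.symm) hab
              · exact ha ▸ hadj b hb
            · rcases Finset.mem_insert.mp hb with hb | hb
              · exact hb ▸ (hadj a ha).symm
              · exact hcl a ha b hb hab
          · rw [Finset.card_insert_of_notMem, hTc]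
            intro hvT
            exact Finset.notMem_erase v S (Finset.mem_of_mem_filter v (hTA hvT))
        · exact Or.inr ⟨T, hTA.trans hAS, hind, hTc⟩
      · have hBcard : Rbound r (q + 1) ≤ B.card := by omega
        rcases ih r (q + 1) (by omega) H B hBcard with ⟨T, hTB, hcl, hTc⟩ | ⟨T, hTB, hind, hTc⟩
        · exact Or.inl ⟨T, hTB.trans hBS, hcl, hTc⟩
        · -- independent set of size r in B; add v
          refine Or.inr ⟨insert v T, ?_, ?_, ?_⟩
          · exact Finset.insert_subset hv (hTB.trans hBS)
          · have hnadj : ∀ t ∈ T, ¬ H.Adj v t := fun t ht => (Finset.mem_filter.mp (hTB ht)).2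
            intro a ha b hb hab
            rcases Finset.mem_insert.mp ha with ha | ha
            · rcases Finset.mem_insert.mp hb with hb | hb
              · exact absurd (ha.trans hb.symm) hab
              · exact ha ▸ hnadj b hb
            · rcases Finset.mem_insert.mp hb with hb | hb
              · exact hb ▸ fun h => hnadj a ha h.symm
              · exact hind a ha b hb hab
          · rw [Finset.card_insert_of_notMem, hTc]
            intro hvT
            exact Finset.notMem_erase v S (Finset.mem_of_mem_filter v (hTB hvT))


lemma Rbound_mem (r q : ℕ) :
    Rbound r q ∈ {p | ∀ H : SimpleGraph (Fin p),
      (∃ T : Finset (Fin p), (∀ a ∈ T, ∀ b ∈ T, a ≠ b → H.Adj a b) ∧ T.card = q) ∨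
      (∃ T : Finset (Fin p), (∀ a ∈ T, ∀ b ∈ T, ¬ H.Adj a b) ∧ T.card = r)} := by
  intro H
  rcases ramsey_aux (r + q) r q le_rfl H Finset.univ (by simp) with
    ⟨T, _, hcl, hc⟩ | ⟨T, _, hind, hc⟩
  · exact Or.inl ⟨T, hcl, hc⟩
  · refine Or.inr ⟨T, fun a ha b hb => ?_, hc⟩
    by_cases h : a = b
    · subst h; exact H.loopless.irrefl a
    · exact hind a ha b hb h

lemma ramsey_key (G : SimpleGraph V) (r q : ℕ) (Y : Finset V)
    (hY : ramseyNum r q ≤ Y.card) :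
    (∃ T ⊆ Y, (∀ a ∈ T, ∀ b ∈ T, a ≠ b → G.Adj a b) ∧ T.card = q) ∨
    (∃ T ⊆ Y, (∀ a ∈ T, ∀ b ∈ T, ¬ G.Adj a b) ∧ T.card = r) := by
  classical
  have hp : ramseyNum r q ∈ {p | ∀ H : SimpleGraph (Fin p),
      (∃ T : Finset (Fin p), (∀ a ∈ T, ∀ b ∈ T, a ≠ b → H.Adj a b) ∧ T.card = q) ∨
      (∃ T : Finset (Fin p), (∀ a ∈ T, ∀ b ∈ T, ¬ H.Adj a b) ∧ T.card = r)} :=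
    Nat.sInf_mem ⟨Rbound r q, Rbound_mem r q⟩
  obtain ⟨Y', hY'sub, hY'card⟩ := Finset.exists_subset_card_eq hY
  have e : {x // x ∈ Y'} ≃ Fin (ramseyNum r q) := Y'.equivFin.trans (finCongr hY'card)
  set H : SimpleGraph (Fin (ramseyNum r q)) :=
    { Adj := fun i j => G.Adj (e.symm i).1 (e.symm j).1
      symm := ⟨fun i j h => h.symm⟩
      loopless := ⟨fun i h => G.loopless.irrefl _ h⟩ } with hH
  have hinj : Function.Injective (fun i => ((e.symm i).1 : V)) :=
    Subtype.val_injective.comp e.symm.injective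
  rcases hp H with ⟨T, hcl, hTc⟩ | ⟨T, hind, hTc⟩
  · refine Or.inl ⟨T.image (fun i => (e.symm i).1), ?_, ?_, ?_⟩
    · intro x hx
      obtain ⟨i, _, rfl⟩ := Finset.mem_image.mp hx
      exact hY'sub (e.symm i).2
    · intro a ha b hb hab
      obtain ⟨i, hi, rfl⟩ := Finset.mem_image.mp ha
      obtain ⟨j, hj, rfl⟩ := Finset.mem_image.mp hb
      exact hcl i hi j hj (fun h => hab (by rw [h]))
    · rw [Finset.card_image_of_injective _ hinj, hTc]
  · refine Or.inr ⟨T.image (fun i => (e.symm i).1), ?_, ?_, ?_⟩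
    · intro x hx
      obtain ⟨i, _, rfl⟩ := Finset.mem_image.mp hx
      exact hY'sub (e.symm i).2
    · intro a ha b hb
      obtain ⟨i, hi, rfl⟩ := Finset.mem_image.mp ha
      obtain ⟨j, hj, rfl⟩ := Finset.mem_image.mp hb
      exact hind i hi j hj
    · rw [Finset.card_image_of_injective _ hinj, hTc]

/-- For r, q ≥ 3, in a K_{1,r}-free graph a vertex set inducing a K_q-free
subgraph has size at most (R(r,q)-1)·γ(G). -/
theorem stmt15 [Fintype V] (G : SimpleGraph V) (r q : ℕ) (hr : 3 ≤ r) (hq : 3 ≤ q)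
    (hG : K1rFree G r) (X : Finset V)
    (hX : ¬ ∃ T : Finset V, T ⊆ X ∧ (∀ a ∈ T, ∀ b ∈ T, a ≠ b → G.Adj a b) ∧ T.card = q) :
    X.card ≤ (ramseyNum r q - 1) * domNum G := by
  classical
  have hdomne : {n | ∃ D : Finset V, IsDomFinset G D ∧ D.card = n}.Nonempty :=
    ⟨(Finset.univ : Finset V).card, Finset.univ,
      fun v hv => absurd (Finset.mem_univ v) hv, rfl⟩
  obtain ⟨D, hD, hDcard⟩ := Nat.sInf_mem hdomne
  set p := ramseyNum r q
  set C : V → Finset V := fun u => insert u (Finset.univ.filter (fun w => G.Adj u w))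
    with hC
  have hXsub : X ⊆ D.biUnion (fun u => X ∩ C u) := by
    intro x hx
    rw [Finset.mem_biUnion]
    by_cases hxD : x ∈ D
    · exact ⟨x, hxD, Finset.mem_inter.mpr ⟨hx, Finset.mem_insert_self _ _⟩⟩
    · obtain ⟨u, hu, hadj⟩ := hD x hxD
      exact ⟨u, hu, Finset.mem_inter.mpr ⟨hx, Finset.mem_insert_of_mem
        (Finset.mem_filter.mpr ⟨Finset.mem_univ _, hadj⟩)⟩⟩
  have hkey : ∀ u, (X ∩ C u).card ≤ p - 1 := by
    intro u
    by_contra hcon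
    have hle : p ≤ (X ∩ C u).card := by omega
    rcases ramsey_key G r q (X ∩ C u) hle with ⟨T, hTsub, hcl, hTc⟩ | ⟨T, hTsub, hind, hTc⟩
    · exact hX ⟨T, hTsub.trans Finset.inter_subset_left, hcl, hTc⟩
    · have huT : u ∉ T := by
        intro huT
        obtain ⟨a, ha, hau⟩ := Finset.exists_mem_ne (s := T) (by omega) u
        have haC : a ∈ C u := (Finset.mem_inter.mp (hTsub ha)).2
        rcases Finset.mem_insert.mp haC with h | h
        · exact hau h
        · exact hind u huT a ha (Finset.mem_filter.mp h).2
      have hadj : ∀ a ∈ T, G.Adj u a := by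
        intro a ha
        have haC : a ∈ C u := (Finset.mem_inter.mp (hTsub ha)).2
        rcases Finset.mem_insert.mp haC with h | h
        · exact absurd (h ▸ ha) huT
        · exact (Finset.mem_filter.mp h).2
      exact hG ⟨u, T, hadj, fun a ha b hb _ => hind a ha b hb, hTc⟩
  calc X.card ≤ (D.biUnion (fun u => X ∩ C u)).card := Finset.card_le_card hXsub
    _ ≤ ∑ u ∈ D, (X ∩ C u).card := Finset.card_biUnion_le
    _ ≤ ∑ _u ∈ D, (p - 1) := Finset.sum_le_sum (fun u _ => hkey u)
    _ = D.card * (p - 1) := by rw [Finset.sum_const, smul_eq_mul]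
    _ = (p - 1) * domNum G := by rw [domNum, hDcard, Nat.mul_comm]
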